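/- The function h(a) = φ(a) − aΦ(−a) is strictly positive for all a ∈ ℝ, strictly decreasing for a > 0, and satisfies h(a) → 0 as a → ∞. Consequently, the asymptotic bias Δ₁(a) = 2h(a) of Viterbi training for the symmetric two-Gaussian mixture vanishes as the components separate (a → ∞) and is maximal at a = 0 with value 2φ(0). -/

import Mathlib

open Real Set MeasureTheory Filter

noncomputable def stdPhi (x : ℝ) : ℝ := (Real.sqrt (2 * Real.pi))⁻¹ * Real.exp (-x ^ 2 / 2)

noncomputable def stdCDF (t : ℝ) : ℝ := ∫ x in Set.Iic t, stdPhi x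

lemma stdPhi_eq : stdPhi = ProbabilityTheory.gaussianPDFReal 0 1 := by
  funext x
  simp [stdPhi, ProbabilityTheory.gaussianPDFReal]

lemma stdPhi_pos (x : ℝ) : 0 < stdPhi x := by
  rw [stdPhi_eq]; exact ProbabilityTheory.gaussianPDFReal_pos 0 1 x one_ne_zero

lemma stdPhi_integrable : Integrable stdPhi := by
  rw [stdPhi_eq]; exact ProbabilityTheory.integrable_gaussianPDFReal 0 1

lemma stdPhi_continuous : Continuous stdPhi := by
  unfold stdPhi; fun_prop

lemma stdPhi_even (x : ℝ) : stdPhi (-x) = stdPhi x := by simp [stdPhi]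

lemma stdPhi_hasDerivAt (x : ℝ) : HasDerivAt stdPhi (-x * stdPhi x) x := by
  have h1 : HasDerivAt (fun x : ℝ => -x ^ 2 / 2) (-x) x := by
    have := ((hasDerivAt_pow 2 x).neg).div_const 2
    refine this.congr_deriv ?_
    ring
  have h2 := (h1.exp).const_mul (Real.sqrt (2 * Real.pi))⁻¹
  refine h2.congr_deriv ?_
  simp only [stdPhi]; ring

lemma mul_stdPhi_integrable : Integrable (fun x : ℝ => x * stdPhi x) := by
  have h : Integrable (fun x : ℝ => x * Real.exp (-(1/2) * x ^ 2)) :=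
    integrable_mul_exp_neg_mul_sq (by norm_num)
  have h2 := h.const_mul (Real.sqrt (2 * Real.pi))⁻¹
  apply h2.congr
  filter_upwards with x
  simp only [stdPhi]
  ring_nf

lemma neg_mul_stdPhi_integrable : Integrable (fun x : ℝ => -x * stdPhi x) := by
  apply mul_stdPhi_integrable.neg.congr
  filter_upwards with x
  simp only [Pi.neg_apply, neg_mul]

lemma negsq_atTop : Tendsto (fun x : ℝ => -x ^ 2 / 2) atTop atBot := by
  have h : Tendsto (fun x : ℝ => x ^ 2) atTop atTop := tendsto_pow_atTop two_ne_zero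
  have h2 : Tendsto (fun x : ℝ => -x ^ 2) atTop atBot := tendsto_neg_atTop_atBot.comp h
  exact h2.atBot_div_const (by norm_num)

lemma stdPhi_tendsto_atTop : Tendsto stdPhi atTop (nhds 0) := by
  have h2 := (Real.tendsto_exp_atBot.comp negsq_atTop).const_mul (Real.sqrt (2 * Real.pi))⁻¹
  simp only [Function.comp_def, mul_zero] at h2
  exact h2

lemma stdPhi_tendsto_atBot : Tendsto stdPhi atBot (nhds 0) := by
  have h := stdPhi_tendsto_atTop.comp tendsto_neg_atBot_atTop
  apply h.congr
  intro x
  exact stdPhi_even x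

lemma integral_neg_mul_stdPhi (t : ℝ) : ∫ x in Set.Iic t, (-x * stdPhi x) = stdPhi t := by
  have := integral_Iic_of_hasDerivAt_of_tendsto (f := stdPhi) (f' := fun x => -x * stdPhi x)
    (a := t) (m := 0) (stdPhi_continuous.continuousWithinAt)
    (fun x _ => stdPhi_hasDerivAt x)
    (neg_mul_stdPhi_integrable.integrableOn) stdPhi_tendsto_atBot
  simpa using this

lemma stdCDF_pos (t : ℝ) : 0 < stdCDF t := by
  rw [stdCDF, setIntegral_pos_iff_support_of_nonneg_ae]
  · have hs : Function.support stdPhi = Set.univ := by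
      ext x; simp [Function.support, (stdPhi_pos x).ne']
    rw [hs, Set.univ_inter]
    simp [Real.volume_Iic]
  · filter_upwards with x using (stdPhi_pos x).le
  · exact stdPhi_integrable.integrableOn

lemma stdCDF_hasDerivAt (t : ℝ) : HasDerivAt stdCDF (stdPhi t) t := by
  have key : ∀ u : ℝ, stdCDF u = stdCDF 0 + ∫ x in (0:ℝ)..u, stdPhi x := by
    intro u
    rw [← intervalIntegral.integral_Iic_sub_Iic stdPhi_integrable.integrableOn
      stdPhi_integrable.integrableOn]
    simp [stdCDF]
  have h : HasDerivAt (fun u => stdCDF 0 + ∫ x in (0:ℝ)..u, stdPhi x) (stdPhi t) t := by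
    apply HasDerivAt.const_add
    exact intervalIntegral.integral_hasDerivAt_right
      (stdPhi_continuous.intervalIntegrable 0 t)
      (stdPhi_continuous.stronglyMeasurable.stronglyMeasurableAtFilter)
      stdPhi_continuous.continuousAt
  exact h.congr_of_eventuallyEq (Filter.Eventually.of_forall fun u => key u)

noncomputable def hFun (a : ℝ) : ℝ := stdPhi a - a * stdCDF (-a)

lemma hFun_hasDerivAt (a : ℝ) : HasDerivAt hFun (-stdCDF (-a)) a := by
  have h1 := stdPhi_hasDerivAt a
  have h2 : HasDerivAt (fun a : ℝ => stdCDF (-a)) (-stdPhi (-a)) a := by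
    have := (stdCDF_hasDerivAt (-a)).comp a (hasDerivAt_neg a)
    exact this.congr_deriv (by ring)
  have h3 := (hasDerivAt_id a).mul h2
  have h4 := h1.sub h3
  refine h4.congr_deriv ?_
  rw [stdPhi_even]
  simp only [id_eq]
  ring

lemma hFun_strictAnti : StrictAnti hFun := by
  apply strictAnti_of_deriv_neg
  intro x
  rw [(hFun_hasDerivAt x).deriv]
  simpa using stdCDF_pos (-x)

lemma millBound {a : ℝ} (ha : 0 < a) : a * stdCDF (-a) ≤ stdPhi a := by
  have key : stdCDF (-a) ≤ stdPhi a / a := by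
    have h1 : ∫ x in Set.Iic (-a), (-x / a * stdPhi x) = stdPhi a / a := by
      have heq : (fun x : ℝ => -x / a * stdPhi x) = fun x => a⁻¹ * (-x * stdPhi x) := by
        funext x
        rw [neg_div, div_eq_mul_inv]
        ring
      rw [heq, integral_const_mul, integral_neg_mul_stdPhi, stdPhi_even]
      rw [div_eq_mul_inv, mul_comm]
    rw [stdCDF, ← h1]
    apply setIntegral_mono_on
    · exact stdPhi_integrable.integrableOn
    · have : Integrable (fun x : ℝ => -x / a * stdPhi x) := by
        apply (neg_mul_stdPhi_integrable.const_mul a⁻¹).congr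
        filter_upwards with x
        rw [neg_div, div_eq_mul_inv]
        ring
      exact this.integrableOn
    · exact measurableSet_Iic
    · intro x hx
      have hx' : x ≤ -a := hx
      have h2 : (1:ℝ) ≤ -x / a := by
        rw [le_div_iff₀ ha]; linarith
      nlinarith [stdPhi_pos x]
  calc a * stdCDF (-a) ≤ a * (stdPhi a / a) := mul_le_mul_of_nonneg_left key ha.le
    _ = stdPhi a := by field_simp

lemma hFun_tendsto : Tendsto hFun atTop (nhds 0) := by
  apply tendsto_of_tendsto_of_tendsto_of_le_of_le' (g := fun _ : ℝ => (0:ℝ))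
    (h := stdPhi) tendsto_const_nhds stdPhi_tendsto_atTop
  · filter_upwards [eventually_gt_atTop (0:ℝ)] with a ha
    have := millBound ha
    simp only [hFun]; linarith
  · filter_upwards [eventually_gt_atTop (0:ℝ)] with a ha
    have h1 : 0 < stdCDF (-a) := stdCDF_pos (-a)
    simp only [hFun]
    nlinarith

lemma hFun_pos (a : ℝ) : 0 < hFun a := by
  have h1 : hFun (a + 1) < hFun a := hFun_strictAnti (by linarith)
  have h2 : (0:ℝ) ≤ hFun (a + 1) := by
    refine le_of_tendsto hFun_tendsto ?_
    filter_upwards [eventually_ge_atTop (a + 1)] with b hb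
    exact hFun_strictAnti.antitone hb
  linarith

theorem stmt19 :
    (∀ a : ℝ, 0 < stdPhi a - a * stdCDF (-a)) ∧
    StrictAntiOn (fun a : ℝ => stdPhi a - a * stdCDF (-a)) (Set.Ioi 0) ∧
    Tendsto (fun a : ℝ => stdPhi a - a * stdCDF (-a)) atTop (nhds 0) ∧
    (∀ a : ℝ, 0 ≤ a →
      2 * (stdPhi a - a * stdCDF (-a)) ≤ 2 * (stdPhi 0 - 0 * stdCDF (-0))) ∧
    2 * (stdPhi 0 - 0 * stdCDF (-0)) = 2 * stdPhi 0 := by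
  refine ⟨hFun_pos, hFun_strictAnti.strictAntiOn _, hFun_tendsto, ?_, by ring⟩
  intro a ha
  have h : hFun a ≤ hFun 0 := hFun_strictAnti.antitone ha
  simp only [hFun] at h
  linarith
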